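/- Let p > 2 and φ(x) = sin(x) on Ω = (0,π). There exists a constant C > 0 such that for every v ∈ C¹([0,π]) with v(0) = v(π) = 0, one has C·|∫₀^π v(x) sin(x) dx|^p ≤ ∫₀^π |v'(x)|^p sin(x) dx. -/

import Mathlib

open MeasureTheory Real intervalIntegral Set

lemma sin_rpow_neg_integrable {a : ℝ} (ha : 0 < a) (ha1 : a < 1) :
    IntervalIntegrable (fun x => Real.sin x ^ (-a)) volume 0 Real.pi := by
  have hπ := Real.pi_pos
  set b : ℝ → ℝ := fun x => (π / 2) ^ a * x ^ (-a) + (π / 2) ^ a * (π - x) ^ (-a) with hb_def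
  have hb_int : IntervalIntegrable b volume 0 π := by
    have h1 : IntervalIntegrable (fun x : ℝ => x ^ (-a)) volume 0 π :=
      intervalIntegrable_rpow' (by linarith)
    have h2 : IntervalIntegrable (fun x : ℝ => (π - x) ^ (-a)) volume 0 π := by
      have := (h1.comp_sub_left π).symm
      simpa using this
    exact (h1.const_mul _).add (h2.const_mul _)
  refine hb_int.mono_fun' ?_ ?_
  · have hcont : ContinuousOn (fun x => Real.sin x ^ (-a)) (Ioo 0 π) := by
      apply (Real.continuous_sin.continuousOn).rpow_const
      intro x hx
      exact Or.inl (ne_of_gt (Real.sin_pos_of_pos_of_lt_pi hx.1 hx.2))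
    have h := hcont.aestronglyMeasurable (μ := volume) measurableSet_Ioo
    rw [Set.uIoc_of_le hπ.le, ← Measure.restrict_congr_set Ioo_ae_eq_Ioc]
    exact h
  · rw [Set.uIoc_of_le hπ.le]
    filter_upwards [ae_restrict_mem measurableSet_Ioc] with x hx
    have hsin : 0 ≤ Real.sin x := Real.sin_nonneg_of_nonneg_of_le_pi hx.1.le hx.2
    rw [Real.norm_eq_abs, abs_of_nonneg (Real.rpow_nonneg hsin _)]
    have ht1 : (0:ℝ) ≤ (π / 2) ^ a * x ^ (-a) :=
      mul_nonneg (Real.rpow_nonneg (by positivity) _) (Real.rpow_nonneg hx.1.le _)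
    have ht2 : (0:ℝ) ≤ (π / 2) ^ a * (π - x) ^ (-a) :=
      mul_nonneg (Real.rpow_nonneg (by positivity) _)
        (Real.rpow_nonneg (by linarith [hx.2]) _)
    have hfac : ((2:ℝ) / π) ^ (-a) = (π / 2) ^ a := by
      rw [Real.rpow_neg (by positivity), ← Real.inv_rpow (by positivity), inv_div]
    show Real.sin x ^ (-a) ≤ (π / 2) ^ a * x ^ (-a) + (π / 2) ^ a * (π - x) ^ (-a)
    rcases eq_or_lt_of_le hx.2 with hxe | hxlt
    · subst hxe
      rw [Real.sin_pi, Real.zero_rpow (by linarith : -a ≠ 0)]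
      linarith
    · rcases le_or_gt x (π / 2) with hle | hgt
      · have hlow : 2 / π * x ≤ Real.sin x := Real.mul_le_sin hx.1.le hle
        have h1 : Real.sin x ^ (-a) ≤ (2 / π * x) ^ (-a) :=
          Real.rpow_le_rpow_of_nonpos (mul_pos (by positivity) hx.1) hlow (by linarith)
        have h2 : (2 / π * x) ^ (-a) = (π / 2) ^ a * x ^ (-a) := by
          rw [Real.mul_rpow (by positivity) hx.1.le, hfac]
        linarith [h2 ▸ h1]
      · have hpx : (0:ℝ) < π - x := by linarith
        have hlow : 2 / π * (π - x) ≤ Real.sin x := by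
          rw [← Real.sin_pi_sub]
          exact Real.mul_le_sin hpx.le (by linarith)
        have h1 : Real.sin x ^ (-a) ≤ (2 / π * (π - x)) ^ (-a) :=
          Real.rpow_le_rpow_of_nonpos (mul_pos (by positivity) hpx) hlow (by linarith)
        have h2 : (2 / π * (π - x)) ^ (-a) = (π / 2) ^ a * (π - x) ^ (-a) := by
          rw [Real.mul_rpow (by positivity) hpx.le, hfac]
        linarith [h2 ▸ h1]

theorem stmt_1 (p : ℝ) (hp : 2 < p) :
    ∃ C > (0 : ℝ), ∀ v : ℝ → ℝ, ContDiffOn ℝ 1 v (Set.Icc 0 Real.pi) →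
      v 0 = 0 → v Real.pi = 0 →
      C * |∫ x in (0:ℝ)..Real.pi, v x * Real.sin x| ^ p
        ≤ ∫ x in (0:ℝ)..Real.pi, |derivWithin v (Set.Icc 0 Real.pi) x| ^ p * Real.sin x := by
  have hπ := Real.pi_pos
  have hp1 : (1:ℝ) < p := by linarith
  have hp0 : (0:ℝ) < p := by linarith
  set q : ℝ := p / (p - 1) with hq_def
  have hpq : p.HolderConjugate q := Real.HolderConjugate.conjExponent hp1
  set a : ℝ := (p - 1)⁻¹ with ha_def
  have ha : 0 < a := by rw [ha_def]; exact inv_pos.mpr (by linarith)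
  have ha1 : a < 1 := by
    rw [ha_def]
    rw [inv_lt_one_iff₀]
    right; linarith
  set K : ℝ := ∫ x in (0:ℝ)..π, Real.sin x ^ (-a) with hK_def
  have hK0 : 0 ≤ K := by
    apply intervalIntegral.integral_nonneg hπ.le
    intro x hx
    exact Real.rpow_nonneg (Real.sin_nonneg_of_nonneg_of_le_pi hx.1 hx.2) _
  have hD : (0:ℝ) < 2 ^ p * (K + 1) ^ (p - 1) := by positivity
  refine ⟨(2 ^ p * (K + 1) ^ (p - 1))⁻¹, by positivity, ?_⟩
  intro v hv hv0 hvπ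
  set v' : ℝ → ℝ := fun x => derivWithin v (Set.Icc 0 π) x with hv'_def
  have hv'c : ContinuousOn v' (Icc 0 π) :=
    hv.continuousOn_derivWithin (uniqueDiffOn_Icc hπ) le_rfl
  have huIcc : uIcc (0:ℝ) π = Icc 0 π := uIcc_of_le hπ.le
  have hv'int : IntervalIntegrable v' volume 0 π :=
    (hv'c.mono huIcc.subset).intervalIntegrable
  have habs_int : IntervalIntegrable (fun x => |v' x|) volume 0 π :=
    (hv'c.abs.mono huIcc.subset).intervalIntegrable
  set A : ℝ := ∫ x in (0:ℝ)..π, |v' x| with hA_def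
  have hA0 : 0 ≤ A := by
    apply intervalIntegral.integral_nonneg hπ.le
    intro x _; exact abs_nonneg _
  -- pointwise bound |v x| ≤ A
  have hvx : ∀ x ∈ Icc (0:ℝ) π, |v x| ≤ A := by
    intro x hx
    have hft : ∫ t in (0:ℝ)..x, v' t = v x - v 0 := by
      apply intervalIntegral.integral_eq_sub_of_hasDeriv_right_of_le hx.1
      · exact hv.continuousOn.mono (Icc_subset_Icc le_rfl hx.2)
      · intro t ht
        have htIcc : t ∈ Icc (0:ℝ) π := ⟨ht.1.le, (ht.2.trans_le hx.2).le⟩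
        have hd := (hv.differentiableOn one_ne_zero t htIcc).hasDerivWithinAt
        have : HasDerivAt v (v' t) t :=
          hd.hasDerivAt (Icc_mem_nhds ht.1 (ht.2.trans_le hx.2))
        exact this.hasDerivWithinAt
      · exact hv'int.mono_set (by
          rw [uIcc_of_le hx.1, uIcc_of_le hπ.le]
          exact Icc_subset_Icc le_rfl hx.2)
    have h1 : |v x| = |∫ t in (0:ℝ)..x, v' t| := by rw [hft, hv0, sub_zero]
    rw [h1]
    calc |∫ t in (0:ℝ)..x, v' t| ≤ ∫ t in (0:ℝ)..x, |v' t| :=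
          intervalIntegral.abs_integral_le_integral_abs hx.1
      _ ≤ A := by
          apply intervalIntegral.integral_mono_interval le_rfl hx.1 hx.2 ?_ habs_int
          filter_upwards with t using abs_nonneg _
  -- |∫ v sin| ≤ 2 A
  have hI : |∫ x in (0:ℝ)..π, v x * Real.sin x| ≤ 2 * A := by
    have hvsc : ContinuousOn (fun x => v x * Real.sin x) (Icc 0 π) :=
      hv.continuousOn.mul Real.continuous_sin.continuousOn
    calc |∫ x in (0:ℝ)..π, v x * Real.sin x| ≤ ∫ x in (0:ℝ)..π, |v x * Real.sin x| :=
          intervalIntegral.abs_integral_le_integral_abs hπ.le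
      _ ≤ ∫ x in (0:ℝ)..π, A * Real.sin x := by
          apply intervalIntegral.integral_mono_on hπ.le
          · exact (hvsc.abs.mono huIcc.subset).intervalIntegrable
          · exact (continuous_const.mul Real.continuous_sin).intervalIntegrable _ _
          · intro x hx
            have hs : 0 ≤ Real.sin x := Real.sin_nonneg_of_nonneg_of_le_pi hx.1 hx.2
            rw [abs_mul, abs_of_nonneg hs]
            exact mul_le_mul_of_nonneg_right (hvx x hx) hs
      _ = 2 * A := by
          rw [intervalIntegral.integral_const_mul, integral_sin, Real.cos_zero, Real.cos_pi]
          ring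
  -- the RHS
  set R : ℝ := ∫ x in (0:ℝ)..π, |v' x| ^ p * Real.sin x with hR_def
  have hR0 : 0 ≤ R := by
    apply intervalIntegral.integral_nonneg hπ.le
    intro x hx
    exact mul_nonneg (Real.rpow_nonneg (abs_nonneg _) _)
      (Real.sin_nonneg_of_nonneg_of_le_pi hx.1 hx.2)
  -- Hölder
  set μ : Measure ℝ := volume.restrict (Set.Ioc 0 π) with hμ_def
  have hne : ∀ᵐ x ∂μ, x ∈ Set.Ioo (0:ℝ) π := by
    have h1 : ∀ᵐ x ∂μ, x ∈ Set.Ioc (0:ℝ) π := ae_restrict_mem measurableSet_Ioc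
    have h2 : ∀ᵐ x ∂μ, x ≠ π := by
      refine ae_iff.mpr ?_
      have hs : {x : ℝ | ¬x ≠ π} = {π} := by ext y; simp
      rw [hs]
      exact le_antisymm ((Measure.restrict_apply_le _ _).trans_eq Real.volume_singleton)
        (by simp)
    filter_upwards [h1, h2] with x hx hxe
    exact ⟨hx.1, lt_of_le_of_ne hx.2 hxe⟩
  set f : ℝ → ℝ := fun x => |v' x| * Real.sin x ^ p⁻¹ with hf_def
  set g : ℝ → ℝ := fun x => Real.sin x ^ (-p⁻¹) with hg_def
  have hf_cont : ContinuousOn f (Icc 0 π) := by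
    apply hv'c.abs.mul
    apply Real.continuous_sin.continuousOn.rpow_const
    intro x _
    right; positivity
  have hf_aesm : AEStronglyMeasurable f μ :=
    (hf_cont.mono Ioc_subset_Icc_self).aestronglyMeasurable measurableSet_Ioc
  have hMf : MemLp f (ENNReal.ofReal p) μ := by
    obtain ⟨M, hM⟩ := isCompact_Icc.exists_bound_of_continuousOn hf_cont
    refine MemLp.of_bound hf_aesm M ?_
    filter_upwards [ae_restrict_mem measurableSet_Ioc] with x hx
    exact hM x (Ioc_subset_Icc_self hx)
  have hg_aesm : AEStronglyMeasurable g μ := by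
    have hcont : ContinuousOn g (Ioo 0 π) := by
      apply Real.continuous_sin.continuousOn.rpow_const
      intro x hx
      exact Or.inl (ne_of_gt (Real.sin_pos_of_pos_of_lt_pi hx.1 hx.2))
    have h := hcont.aestronglyMeasurable (μ := volume) measurableSet_Ioo
    rw [hμ_def, ← Measure.restrict_congr_set Ioo_ae_eq_Ioc]
    exact h
  have hK_int : Integrable (fun x => Real.sin x ^ (-a)) μ :=
    (sin_rpow_neg_integrable ha ha1).1
  have hgq_eq : ∀ᵐ x ∂μ, ‖g x‖ ^ q = Real.sin x ^ (-a) := by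
    filter_upwards [hne] with x hx
    have hs : 0 < Real.sin x := Real.sin_pos_of_pos_of_lt_pi hx.1 hx.2
    rw [hg_def]
    rw [Real.norm_eq_abs, abs_of_nonneg (Real.rpow_nonneg hs.le _),
      ← Real.rpow_mul hs.le]
    congr 1
    rw [ha_def, hq_def]
    field_simp
  have hMg : MemLp g (ENNReal.ofReal q) μ := by
    have hq0 : (0:ℝ) < q := hpq.symm.pos
    have hq0' : ENNReal.ofReal q ≠ 0 := by
      simp only [ne_eq, ENNReal.ofReal_eq_zero, not_le]; exact hq0
    rw [← memLp_norm_rpow_iff hg_aesm hq0' ENNReal.ofReal_ne_top]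
    rw [ENNReal.div_self hq0' ENNReal.ofReal_ne_top, memLp_one_iff_integrable]
    have := hK_int.congr ((by filter_upwards [hgq_eq] with x hx using hx.symm) :
      (fun x => Real.sin x ^ (-a)) =ᵐ[μ] fun x => ‖g x‖ ^ q)
    simpa [ENNReal.toReal_ofReal hq0.le] using this
  have hfg_nonneg : 0 ≤ᵐ[μ] f := by
    filter_upwards [ae_restrict_mem measurableSet_Ioc] with x hx
    exact mul_nonneg (abs_nonneg _) (Real.rpow_nonneg
      (Real.sin_nonneg_of_nonneg_of_le_pi hx.1.le hx.2) _)
  have hg_nonneg : 0 ≤ᵐ[μ] g := by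
    filter_upwards [ae_restrict_mem measurableSet_Ioc] with x hx
    exact Real.rpow_nonneg (Real.sin_nonneg_of_nonneg_of_le_pi hx.1.le hx.2) _
  have hHolder := integral_mul_le_Lp_mul_Lq_of_nonneg hpq hfg_nonneg hg_nonneg hMf hMg
  -- rewrite the three integrals
  have hfg : ∫ x, f x * g x ∂μ = A := by
    rw [hA_def, intervalIntegral.integral_of_le hπ.le]
    apply MeasureTheory.integral_congr_ae
    filter_upwards [hne] with x hx
    have hs : 0 < Real.sin x := Real.sin_pos_of_pos_of_lt_pi hx.1 hx.2
    rw [hf_def, hg_def]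
    have : Real.sin x ^ p⁻¹ * Real.sin x ^ (-p⁻¹) = 1 := by
      rw [← Real.rpow_add hs]
      simp
    rw [mul_assoc, this, mul_one]
  have hfp : ∫ x, f x ^ p ∂μ = R := by
    rw [hR_def, intervalIntegral.integral_of_le hπ.le]
    apply MeasureTheory.integral_congr_ae
    filter_upwards [ae_restrict_mem measurableSet_Ioc] with x hx
    have hs : 0 ≤ Real.sin x := Real.sin_nonneg_of_nonneg_of_le_pi hx.1.le hx.2
    rw [hf_def]
    rw [Real.mul_rpow (abs_nonneg _) (Real.rpow_nonneg hs _),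
      ← Real.rpow_mul hs, inv_mul_cancel₀ (ne_of_gt hp0), Real.rpow_one]
  have hgq : ∫ x, g x ^ q ∂μ = K := by
    rw [hK_def, intervalIntegral.integral_of_le hπ.le]
    apply MeasureTheory.integral_congr_ae
    filter_upwards [hgq_eq, hg_nonneg] with x hx hx0
    rw [← hx, Real.norm_eq_abs, abs_of_nonneg hx0]
  rw [hfg, hfp, hgq] at hHolder
  -- chain the inequalities
  have hchain : |∫ x in (0:ℝ)..π, v x * Real.sin x| ≤ 2 * (R ^ (1/p) * K ^ (1/q)) := by
    calc |∫ x in (0:ℝ)..π, v x * Real.sin x| ≤ 2 * A := hI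
      _ ≤ 2 * (R ^ (1/p) * K ^ (1/q)) := by linarith
  have hRK0 : 0 ≤ R ^ (1/p) * K ^ (1/q) :=
    mul_nonneg (Real.rpow_nonneg hR0 _) (Real.rpow_nonneg hK0 _)
  have hpow : |∫ x in (0:ℝ)..π, v x * Real.sin x| ^ p ≤ 2 ^ p * ((K + 1) ^ (p-1) * R) := by
    calc |∫ x in (0:ℝ)..π, v x * Real.sin x| ^ p
        ≤ (2 * (R ^ (1/p) * K ^ (1/q))) ^ p :=
          Real.rpow_le_rpow (abs_nonneg _) hchain hp0.le
      _ = 2 ^ p * (R ^ ((1/p) * p) * K ^ ((1/q) * p)) := by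
          rw [Real.mul_rpow (by norm_num) hRK0,
            Real.mul_rpow (Real.rpow_nonneg hR0 _) (Real.rpow_nonneg hK0 _),
            ← Real.rpow_mul hR0, ← Real.rpow_mul hK0]
      _ = 2 ^ p * (R * K ^ (p - 1)) := by
          rw [one_div_mul_cancel (ne_of_gt hp0), Real.rpow_one]
          congr 2
          rw [hq_def]
          field_simp
      _ ≤ 2 ^ p * ((K + 1) ^ (p-1) * R) := by
          have : K ^ (p - 1) ≤ (K + 1) ^ (p - 1) :=
            Real.rpow_le_rpow hK0 (by linarith) (by linarith)
          have h2 : R * K ^ (p - 1) ≤ (K + 1) ^ (p-1) * R := by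
            rw [mul_comm]
            exact mul_le_mul_of_nonneg_right this hR0
          exact mul_le_mul_of_nonneg_left h2 (by positivity)
  calc (2 ^ p * (K + 1) ^ (p - 1))⁻¹ * |∫ x in (0:ℝ)..π, v x * Real.sin x| ^ p
      ≤ (2 ^ p * (K + 1) ^ (p - 1))⁻¹ * (2 ^ p * ((K + 1) ^ (p-1) * R)) := by
        exact mul_le_mul_of_nonneg_left hpow (by positivity)
    _ = R := by
        field_simp
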